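/- Let s, y ∈ ℝ^d with s ≠ 0, and define ℓ(B) = ‖y − Bs‖²/(2‖s‖²) on symmetric d×d matrices B. Then the gradient of ℓ at B is ∇ℓ(B) = (1/(2‖s‖²))(−s(y − Bs)ᵀ − (y − Bs)sᵀ), and its nuclear norm satisfies ‖∇ℓ(B)‖_* ≤ √(2ℓ(B)); in particular ‖∇ℓ(B)‖_F ≤ √(2ℓ(B)). -/

import Mathlib

open Finset Matrix

/-- The nuclear norm of a real matrix: the sum of its singular values
(square roots of the eigenvalues of `Aᵀ * A`). -/
noncomputable def nuclearNorm {d : ℕ} (A : Matrix (Fin d) (Fin d) ℝ) : ℝ :=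
  ∑ i, Real.sqrt ((show (Matrix.transpose A * A).IsHermitian by
    simpa [Matrix.conjTranspose_eq_transpose_of_trivial] using Matrix.isHermitian_conjTranspose_mul_self A).eigenvalues i)

/-- The Frobenius norm of a real matrix. -/
noncomputable def frobNorm {d : ℕ} (A : Matrix (Fin d) (Fin d) ℝ) : ℝ :=
  Real.sqrt (∑ i, ∑ j, (A i j) ^ 2)

private lemma key_sum_sqrt {d : ℕ} (lam : Fin d → ℝ) (t : ℝ) (ht : 0 < t)
    (h : ∀ i, lam i = 0 ∨ lam i = t^2) :
    ∑ i, Real.sqrt (lam i) = (∑ i, lam i) / t := by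
  rw [Finset.sum_div]
  refine Finset.sum_congr rfl fun i _ => ?_
  rcases h i with h' | h' <;> rw [h']
  · simp
  · rw [Real.sqrt_sq ht.le]; field_simp

private lemma sum_sqrt_le {d : ℕ} (lam : Fin d → ℝ) (t₁ t₂ : ℝ) (h1 : 0 ≤ t₁) (h2 : 0 ≤ t₂)
    (hmem : ∀ i, lam i = 0 ∨ lam i = t₁^2 ∨ lam i = t₂^2)
    (hsum : ∑ i, lam i = t₁^2 + t₂^2)
    (hsq : ∑ i, (lam i)^2 = (t₁^2)^2 + (t₂^2)^2) :
    ∑ i, Real.sqrt (lam i) ≤ t₁ + t₂ := by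
  rcases eq_or_lt_of_le h1 with h1' | h1'
  · -- t₁ = 0
    rcases eq_or_lt_of_le h2 with h2' | h2'
    · have : ∀ i, lam i = 0 := by
        intro i; rcases hmem i with h | h | h <;> simp [h, ← h1', ← h2']
      simp [this, ← h1', ← h2']
    · have := key_sum_sqrt lam t₂ h2' (fun i => by
        rcases hmem i with h | h | h
        · exact Or.inl h
        · exact Or.inl (by rw [h, ← h1']; ring)
        · exact Or.inr h)
      rw [this, hsum, ← h1']
      rw [zero_pow (by norm_num)]
      rw [zero_add, pow_two, mul_div_assoc, div_self h2'.ne', mul_one, zero_add]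
  · rcases eq_or_lt_of_le h2 with h2' | h2'
    · -- t₂ = 0
      have := key_sum_sqrt lam t₁ h1' (fun i => by
        rcases hmem i with h | h | h
        · exact Or.inl h
        · exact Or.inr h
        · exact Or.inl (by rw [h, ← h2']; ring))
      rw [this, hsum, ← h2', zero_pow (by norm_num), add_zero, pow_two, mul_div_assoc,
        div_self h1'.ne', mul_one]
      linarith
    · -- both positive
      by_cases hne : t₁ = t₂
      · subst hne
        have := key_sum_sqrt lam t₁ h1' (fun i => by
          rcases hmem i with h | h | h
          · exact Or.inl h
          · exact Or.inr h
          · exact Or.inr h)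
        rw [this, hsum]
        rw [show t₁^2 + t₁^2 = (t₁ + t₁) * t₁ by ring, mul_div_assoc, div_self h1'.ne', mul_one]
      · -- distinct positive values
        have hd : t₁*t₂*(t₁+t₂) ≠ 0 := by positivity
        set α : ℝ := (t₁^2+t₁*t₂+t₂^2)/(t₁*t₂*(t₁+t₂)) with hα
        set β : ℝ := 1/(t₁*t₂*(t₁+t₂)) with hβ
        have combo : ∀ i, Real.sqrt (lam i) = α * lam i - β * (lam i)^2 := by
          intro i
          rcases hmem i with h | h | h <;> rw [h]
          · simp
          · rw [Real.sqrt_sq h1'.le, hα, hβ]; field_simp; ring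
          · rw [Real.sqrt_sq h2'.le, hα, hβ]; field_simp; ring
        refine le_of_eq ?_
        calc ∑ i, Real.sqrt (lam i) = ∑ i, (α * lam i - β * (lam i)^2) :=
              Finset.sum_congr rfl fun i _ => combo i
          _ = α * (∑ i, lam i) - β * (∑ i, (lam i)^2) := by
              rw [Finset.sum_sub_distrib, ← Finset.mul_sum, ← Finset.mul_sum]
          _ = t₁ + t₂ := by
              rw [hsum, hsq, hα, hβ]; field_simp; ring

private lemma unit_conj_trace {d : ℕ} (U : Matrix.unitaryGroup (Fin d) ℝ)
    (D : Matrix (Fin d) (Fin d) ℝ) :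
    ((U : Matrix (Fin d) (Fin d) ℝ) * D * star (U : Matrix (Fin d) (Fin d) ℝ)).trace = D.trace := by
  rw [Matrix.trace_mul_comm, ← Matrix.mul_assoc, (Unitary.mem_iff.mp U.2).1, Matrix.one_mul]

private lemma trace_eq_sum_eig {d : ℕ} {M : Matrix (Fin d) (Fin d) ℝ} (hM : M.IsHermitian) :
    M.trace = ∑ i, hM.eigenvalues i := by
  conv_lhs => rw [hM.spectral_theorem, Unitary.conjStarAlgAut_apply]
  rw [unit_conj_trace]
  simp [Matrix.trace_diagonal]

private lemma trace_sq_eq_sum_eig {d : ℕ} {M : Matrix (Fin d) (Fin d) ℝ} (hM : M.IsHermitian) :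
    (M * M).trace = ∑ i, (hM.eigenvalues i)^2 := by
  have key : M * M = (hM.eigenvectorUnitary : Matrix (Fin d) (Fin d) ℝ) *
      (Matrix.diagonal (RCLike.ofReal ∘ hM.eigenvalues) *
        Matrix.diagonal (RCLike.ofReal ∘ hM.eigenvalues)) *
      star (↑hM.eigenvectorUnitary : Matrix (Fin d) (Fin d) ℝ) := by
    conv_lhs => rw [hM.spectral_theorem, Unitary.conjStarAlgAut_apply]
    simp only [Matrix.mul_assoc]
    rw [← Matrix.mul_assoc (star (hM.eigenvectorUnitary : Matrix (Fin d) (Fin d) ℝ)) (hM.eigenvectorUnitary : Matrix (Fin d) (Fin d) ℝ) _,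
      (Unitary.mem_iff.mp hM.eigenvectorUnitary.2).1, Matrix.one_mul]
  rw [key, unit_conj_trace, Matrix.diagonal_mul_diagonal]
  simp [Matrix.trace_diagonal, pow_two]

set_option maxHeartbeats 1000000 in
private lemma nuclear_aux {d : ℕ} (s r : Fin d → ℝ) (a b p c : ℝ)
    (ha : ∑ k, s k * s k = a) (hb : ∑ k, r k * r k = b) (hp : ∑ k, s k * r k = p)
    (hc : c = 1/(2*a)) (ha0 : 0 < a)
    (G : Matrix (Fin d) (Fin d) ℝ)
    (hGe : ∀ i j, G i j = -(c * (s i * r j + r i * s j))) :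
    nuclearNorm G ≤ Real.sqrt (b/a) ∧ ∑ i, ∑ j, (G i j)^2 ≤ b/a := by
  -- helpers
  have quad : ∀ A B C : ℝ, ∑ k, (A*(s k*s k) + B*(s k*r k) + C*(r k*r k)) = A*a + B*p + C*b := by
    intro A B C
    rw [← ha, ← hp, ← hb, Finset.mul_sum, Finset.mul_sum, Finset.mul_sum,
      ← Finset.sum_add_distrib, ← Finset.sum_add_distrib]
  have lin : ∀ (u : Fin d → ℝ) (x₁ x₂ X₁ X₂ : ℝ), (∑ j, u j * s j) = X₁ →
      (∑ j, u j * r j) = X₂ →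
      ∑ j, u j * (x₁ * s j + x₂ * r j) = x₁*X₁ + x₂*X₂ := by
    intro u x₁ x₂ X₁ X₂ h1 h2
    rw [← h1, ← h2, Finset.mul_sum, Finset.mul_sum, ← Finset.sum_add_distrib]
    exact Finset.sum_congr rfl fun j _ => by ring
  have hss : ∑ j, s j * s j = a := ha
  have hsr : ∑ j, s j * r j = p := hp
  have hrr : ∑ j, r j * r j = b := hb
  have hrs : ∑ j, r j * s j = p := by
    rw [← hp]; exact Finset.sum_congr rfl fun j _ => mul_comm _ _
  have hGT : Gᴴ = G := by
    ext i j
    simp only [Matrix.conjTranspose_apply, star_trivial]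
    rw [hGe, hGe]; ring
  have hGv : ∀ w : Fin d → ℝ, G *ᵥ w =
      fun k => (-(c * (∑ j, r j * w j)))*s k + (-(c * (∑ j, s j * w j)))*r k := by
    intro w; funext k
    show ∑ j, G k j * w j = _
    calc ∑ j, G k j * w j
        = ∑ j, ((-(c*s k))*(r j*w j) + (-(c*r k))*(s j*w j)) :=
          Finset.sum_congr rfl fun j _ => by rw [hGe]; ring
      _ = (-(c*s k))*(∑ j, r j*w j) + (-(c*r k))*(∑ j, s j*w j) := by
          rw [Finset.sum_add_distrib, Finset.mul_sum, Finset.mul_sum]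
      _ = _ := by ring
  have hMe : ∀ i j, (Gᴴ * G) i j =
      c^2*(a*(r i*r j) + p*(s i*r j + r i*s j) + b*(s i*s j)) := by
    intro i j
    rw [Matrix.mul_apply]
    calc ∑ k, Gᴴ i k * G k j
        = ∑ k, ((c^2*(r i*r j))*(s k*s k) + (c^2*(s i*r j + r i*s j))*(s k*r k)
            + (c^2*(s i*s j))*(r k*r k)) :=
          Finset.sum_congr rfl fun k _ => by
            simp only [Matrix.conjTranspose_apply, star_trivial]
            rw [hGe, hGe]; ring
      _ = (c^2*(r i*r j))*a + (c^2*(s i*r j + r i*s j))*p + (c^2*(s i*s j))*b := quad _ _ _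
      _ = _ := by ring
  have htr : (Gᴴ * G).trace = c^2*(2*a*b + 2*p^2) := by
    calc (Gᴴ * G).trace = ∑ i, (Gᴴ * G) i i := by
          simp [Matrix.trace, Matrix.diag]
      _ = ∑ i, ((c^2*b)*(s i*s i) + (2*c^2*p)*(s i*r i) + (c^2*a)*(r i*r i)) :=
          Finset.sum_congr rfl fun i _ => by rw [hMe]; ring
      _ = (c^2*b)*a + (2*c^2*p)*p + (c^2*a)*b := quad _ _ _
      _ = _ := by ring
  have htr2 : ((Gᴴ * G) * (Gᴴ * G)).trace = c^4*(2*a^2*b^2 + 12*a*b*p^2 + 2*p^4) := by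
    calc ((Gᴴ * G) * (Gᴴ * G)).trace = ∑ i, ∑ k, (Gᴴ*G) i k * (Gᴴ*G) k i := by
          simp [Matrix.trace, Matrix.diag, Matrix.mul_apply]
      _ = ∑ i, ((c^4*(p*r i+b*s i)^2)*a + (2*c^4*((a*r i+p*s i)*(p*r i+b*s i)))*p
            + (c^4*(a*r i+p*s i)^2)*b) := by
          refine Finset.sum_congr rfl fun i _ => ?_
          calc ∑ k, (Gᴴ*G) i k * (Gᴴ*G) k i
              = ∑ k, ((c^4*(p*r i+b*s i)^2)*(s k*s k)
                  + (2*c^4*((a*r i+p*s i)*(p*r i+b*s i)))*(s k*r k)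
                  + (c^4*(a*r i+p*s i)^2)*(r k*r k)) :=
                Finset.sum_congr rfl fun k _ => by rw [hMe i k, hMe k i]; ring
            _ = _ := quad _ _ _
      _ = ∑ i, ((c^4*(a*b^2 + 3*b*p^2))*(s i*s i) + (c^4*(6*a*b*p + 2*p^3))*(s i*r i)
            + (c^4*(3*a*p^2 + a^2*b))*(r i*r i)) :=
          Finset.sum_congr rfl fun i _ => by ring
      _ = (c^4*(a*b^2 + 3*b*p^2))*a + (c^4*(6*a*b*p + 2*p^3))*p
            + (c^4*(3*a*p^2 + a^2*b))*b := quad _ _ _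
      _ = _ := by ring
  have hM : (Gᴴ * G).IsHermitian := Matrix.isHermitian_conjTranspose_mul_self G
  have hgap : ∀ i, (Matrix.isHermitian_conjTranspose_mul_self G).eigenvalues i = 0 ∨
      ((Matrix.isHermitian_conjTranspose_mul_self G).eigenvalues i - c^2*(p^2+a*b))^2
        = 4*c^4*p^2*(a*b) := by
    intro i
    set lam : ℝ := (Matrix.isHermitian_conjTranspose_mul_self G).eigenvalues i with hlam
    by_cases h0 : lam = 0
    · exact Or.inl h0
    right
    have hmv0 := (Matrix.isHermitian_conjTranspose_mul_self G).mulVec_eigenvectorBasis i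
    set v : Fin d → ℝ := ⇑((Matrix.isHermitian_conjTranspose_mul_self G).eigenvectorBasis i) with hvdef
    obtain ⟨A, hA⟩ : ∃ x, (∑ j, r j * v j) = x := ⟨_, rfl⟩
    obtain ⟨B, hB⟩ : ∃ x, (∑ j, s j * v j) = x := ⟨_, rfl⟩
    have hmv : G *ᵥ (G *ᵥ v) = lam • v := by
      rw [Matrix.mulVec_mulVec, show G * G = Gᴴ * G by rw [hGT]]
      exact hmv0
    have hαw : ∑ j, r j * (G *ᵥ v) j = (-(c*A))*p + (-(c*B))*b := by
      simp only [hGv v, hA, hB]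
      exact lin r _ _ _ _ hrs hrr
    have hβw : ∑ j, s j * (G *ᵥ v) j = (-(c*A))*a + (-(c*B))*p := by
      simp only [hGv v, hA, hB]
      exact lin s _ _ _ _ hss hsr
    have eq1 : (-(c*((-(c*A))*p + (-(c*B))*b)))*p + (-(c*((-(c*A))*a + (-(c*B))*p)))*b
        = lam * A := by
      calc (-(c*((-(c*A))*p + (-(c*B))*b)))*p + (-(c*((-(c*A))*a + (-(c*B))*p)))*b
          = ∑ j, r j * (G *ᵥ (G *ᵥ v)) j := by
            simp only [hGv (G *ᵥ v), hαw, hβw]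
            exact (lin r _ _ _ _ hrs hrr).symm
        _ = ∑ j, r j * (lam • v) j := by rw [hmv]
        _ = lam * A := by
            rw [← hA, Finset.mul_sum]
            exact Finset.sum_congr rfl fun j _ => by
              simp [Pi.smul_apply, smul_eq_mul]; ring
    have eq2 : (-(c*((-(c*A))*p + (-(c*B))*b)))*a + (-(c*((-(c*A))*a + (-(c*B))*p)))*p
        = lam * B := by
      calc (-(c*((-(c*A))*p + (-(c*B))*b)))*a + (-(c*((-(c*A))*a + (-(c*B))*p)))*p
          = ∑ j, s j * (G *ᵥ (G *ᵥ v)) j := by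
            simp only [hGv (G *ᵥ v), hαw, hβw]
            exact (lin s _ _ _ _ hss hsr).symm
        _ = ∑ j, s j * (lam • v) j := by rw [hmv]
        _ = lam * B := by
            rw [← hB, Finset.mul_sum]
            exact Finset.sum_congr rfl fun j _ => by
              simp [Pi.smul_apply, smul_eq_mul]; ring
    have key1 : (lam - c^2*(p^2+a*b))*A = (2*c^2*p*b)*B := by linear_combination -eq1
    have key2 : (lam - c^2*(p^2+a*b))*B = (2*c^2*p*a)*A := by linear_combination -eq2
    have hABnz : A ≠ 0 ∨ B ≠ 0 := by
      by_contra h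
      push_neg at h
      obtain ⟨hA0, hB0⟩ := h
      have hveq : lam • v = 0 := by
        rw [← hmv]
        funext k
        simp [hGv (G *ᵥ v), hαw, hβw, hA0, hB0]
      have hv0 : v = 0 := by
        rcases smul_eq_zero.mp hveq with h' | h'
        · exact absurd h' h0
        · exact h'
      have hne0 := (Matrix.isHermitian_conjTranspose_mul_self G).eigenvectorBasis.orthonormal.ne_zero i
      exact hne0 (by ext k; exact congrFun hv0 k)
    rcases hABnz with hnz | hnz
    · have hfac : ((lam - c^2*(p^2+a*b))^2 - 4*c^4*p^2*(a*b))*A = 0 := by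
        linear_combination (lam - c^2*(p^2+a*b))*key1 + (2*c^2*p*b)*key2
      rcases mul_eq_zero.mp hfac with h' | h'
      · linarith [h']
      · exact absurd h' hnz
    · have hfac : ((lam - c^2*(p^2+a*b))^2 - 4*c^4*p^2*(a*b))*B = 0 := by
        linear_combination (lam - c^2*(p^2+a*b))*key2 + (2*c^2*p*a)*key1
      rcases mul_eq_zero.mp hfac with h' | h'
      · linarith [h']
      · exact absurd h' hnz
  have ha' : a ≠ 0 := ne_of_gt ha0
  have hb0 : 0 ≤ b := by rw [← hb]; exact Finset.sum_nonneg fun i _ => mul_self_nonneg _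
  have hCS : p^2 ≤ a*b := by
    rw [← hp, ← ha, ← hb]
    calc (∑ k, s k * r k)^2 ≤ (∑ k, s k^2) * (∑ k, r k^2) :=
          Finset.sum_mul_sq_le_sq_mul_sq Finset.univ s r
      _ = (∑ k, s k * s k) * (∑ k, r k * r k) := by simp [pow_two]
  have hc0 : 0 < c := by rw [hc]; positivity
  set T := c^2*(p^2+a*b) with hT
  set DD := 4*c^4*p^2*(a*b) with hDD
  have hT0 : 0 ≤ T := by
    rw [hT]
    exact mul_nonneg (sq_nonneg c) (add_nonneg (sq_nonneg p) (mul_nonneg ha0.le hb0))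
  have hDD0 : 0 ≤ DD := by
    rw [hDD]
    exact mul_nonneg (by positivity) (mul_nonneg ha0.le hb0)
  set δ := Real.sqrt DD with hδ
  have hδsq : δ^2 = DD := Real.sq_sqrt hDD0
  have hδ0 : 0 ≤ δ := Real.sqrt_nonneg _
  have hδT : δ ≤ T := by
    have h1 : DD ≤ T^2 := by rw [hT, hDD]; nlinarith [sq_nonneg (c^2*(p^2 - a*b))]
    calc δ = Real.sqrt DD := rfl
      _ ≤ Real.sqrt (T^2) := Real.sqrt_le_sqrt h1
      _ = T := Real.sqrt_sq hT0
  set t₁ := Real.sqrt (T + δ) with ht₁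
  set t₂ := Real.sqrt (T - δ) with ht₂
  have ht₁sq : t₁^2 = T + δ := Real.sq_sqrt (by linarith)
  have ht₂sq : t₂^2 = T - δ := Real.sq_sqrt (by linarith)
  have ht₁0 : 0 ≤ t₁ := Real.sqrt_nonneg _
  have ht₂0 : 0 ≤ t₂ := Real.sqrt_nonneg _
  have hsum : ∑ i, (Matrix.isHermitian_conjTranspose_mul_self G).eigenvalues i = t₁^2 + t₂^2 := by
    rw [← trace_eq_sum_eig (Matrix.isHermitian_conjTranspose_mul_self G), htr, ht₁sq, ht₂sq, hT]
    ring
  have hsq2 : ∑ i, ((Matrix.isHermitian_conjTranspose_mul_self G).eigenvalues i)^2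
      = (t₁^2)^2 + (t₂^2)^2 := by
    rw [← trace_sq_eq_sum_eig (Matrix.isHermitian_conjTranspose_mul_self G), htr2, ht₁sq, ht₂sq, hT]
    linear_combination -2*hδsq - 2*hDD
  have hmem : ∀ i, (Matrix.isHermitian_conjTranspose_mul_self G).eigenvalues i = 0 ∨
      (Matrix.isHermitian_conjTranspose_mul_self G).eigenvalues i = t₁^2 ∨
      (Matrix.isHermitian_conjTranspose_mul_self G).eigenvalues i = t₂^2 := by
    intro i
    rcases hgap i with h | h
    · exact Or.inl h
    right
    have hfac : ((Matrix.isHermitian_conjTranspose_mul_self G).eigenvalues i - T - δ)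
        * ((Matrix.isHermitian_conjTranspose_mul_self G).eigenvalues i - T + δ) = 0 := by
      linear_combination h - hδsq
    rcases mul_eq_zero.mp hfac with h' | h'
    · left; rw [ht₁sq]; linear_combination h'
    · right; rw [ht₂sq]; linear_combination h'
  have hnuc : nuclearNorm G ≤ t₁ + t₂ :=
    sum_sqrt_le _ t₁ t₂ ht₁0 ht₂0 hmem hsum hsq2
  have hab : 0 ≤ a*b - p^2 := by linarith
  have hval : t₁ + t₂ = Real.sqrt (b/a) := by
    have ht₁t₂ : t₁ * t₂ = c^2*(a*b - p^2) := by
      rw [ht₁, ht₂, ← Real.sqrt_mul (by linarith) _]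
      have hprod : (T + δ)*(T - δ) = (c^2*(a*b - p^2))^2 := by
        rw [hT]; linear_combination -hδsq - hDD
      rw [hprod, Real.sqrt_sq (mul_nonneg (sq_nonneg c) hab)]
    have hsq12 : (t₁ + t₂)^2 = b/a := by
      have hexp : (t₁+t₂)^2 = t₁^2 + t₂^2 + 2*(t₁*t₂) := by ring
      rw [hexp, ht₁sq, ht₂sq, ht₁t₂, hT, hc]
      field_simp
      ring
    rw [← hsq12, Real.sqrt_sq (by linarith)]
  have hfro : ∑ i, ∑ j, (G i j)^2 = c^2*(2*a*b + 2*p^2) := by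
    calc ∑ i, ∑ j, (G i j)^2
        = ∑ i, ((c^2*(r i*r i))*a + (2*c^2*(s i*r i))*p + (c^2*(s i*s i))*b) := by
          refine Finset.sum_congr rfl fun i _ => ?_
          calc ∑ j, (G i j)^2
              = ∑ j, ((c^2*(r i*r i))*(s j*s j) + (2*c^2*(s i*r i))*(s j*r j)
                  + (c^2*(s i*s i))*(r j*r j)) :=
                Finset.sum_congr rfl fun j _ => by rw [hGe]; ring
            _ = _ := quad _ _ _
      _ = ∑ i, ((c^2*b)*(s i*s i) + (2*c^2*p)*(s i*r i) + (c^2*a)*(r i*r i)) :=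
          Finset.sum_congr rfl fun i _ => by ring
      _ = (c^2*b)*a + (2*c^2*p)*p + (c^2*a)*b := quad _ _ _
      _ = _ := by ring
  have hfb : ∑ i, ∑ j, (G i j)^2 ≤ b/a := by
    rw [hfro]
    have h4 : c^2*(2*a*b+2*p^2) ≤ c^2*(4*(a*b)) := by nlinarith [sq_nonneg c]
    have h5 : c^2*(4*(a*b)) = b/a := by rw [hc]; field_simp; ring
    linarith
  exact ⟨hnuc.trans hval.le, hfb⟩

/-- The gradient of the loss `ℓ(B) = ‖y − Bs‖²/(2‖s‖²)` on symmetric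
matrices (with the trace inner product) is
`(1/(2‖s‖²))(−s(y−Bs)ᵀ − (y−Bs)sᵀ)`, and its nuclear (hence Frobenius) norm is
at most `√(2ℓ(B))`. -/
theorem loss_gradient_and_norm_bound {d : ℕ}
    (s y : EuclideanSpace ℝ (Fin d)) (hs : s ≠ 0)
    (B : Matrix (Fin d) (Fin d) ℝ) (hB : B.IsSymm)
    (ℓ : Matrix (Fin d) (Fin d) ℝ → ℝ)
    (hℓ : ∀ A : Matrix (Fin d) (Fin d) ℝ,
      ℓ A = ‖y - (show EuclideanSpace ℝ (Fin d) from WithLp.toLp 2 (A.mulVec s))‖ ^ 2 / (2 * ‖s‖ ^ 2))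
    (G : Matrix (Fin d) (Fin d) ℝ)
    (hG : G = (1 / (2 * ‖s‖ ^ 2)) •
      (-(Matrix.vecMulVec s (y - (show EuclideanSpace ℝ (Fin d) from WithLp.toLp 2 (B.mulVec s))))
        - Matrix.vecMulVec (y - (show EuclideanSpace ℝ (Fin d) from WithLp.toLp 2 (B.mulVec s))) s)) :
    (∀ Δ : Matrix (Fin d) (Fin d) ℝ, Δ.IsSymm →
      HasDerivAt (fun t : ℝ => ℓ (B + t • Δ)) (Matrix.trace (G * Δ)) 0) ∧
    nuclearNorm G ≤ Real.sqrt (2 * ℓ B) ∧ frobNorm G ≤ Real.sqrt (2 * ℓ B) := by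
  have hnorm : ∀ x : EuclideanSpace ℝ (Fin d), ‖x‖^2 = ∑ k, x k * x k := by
    intro x
    rw [EuclideanSpace.norm_eq, Real.sq_sqrt (Finset.sum_nonneg fun k _ => by positivity)]
    exact Finset.sum_congr rfl fun k _ => by rw [Real.norm_eq_abs, sq_abs, pow_two]
  set R : Fin d → ℝ := ⇑(y - (show EuclideanSpace ℝ (Fin d) from WithLp.toLp 2 (B.mulVec s))) with hRdef
  have hRk : ∀ k, R k = y k - (B *ᵥ s) k := fun k => rfl
  set a : ℝ := ∑ k, s k * s k with hadef
  set b : ℝ := ∑ k, R k * R k with hbdef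
  set c : ℝ := 1/(2*a) with hcdef
  have hsa : ‖s‖^2 = a := hnorm s
  have ha0 : 0 < a := by
    rw [← hsa]
    have : 0 < ‖s‖ := norm_pos_iff.mpr hs
    positivity
  have ha' : a ≠ 0 := ne_of_gt ha0
  have hGe : ∀ i j, G i j = -(c * (s i * R j + R i * s j)) := by
    intro i j
    have e : ∀ k, (y - (show EuclideanSpace ℝ (Fin d) from WithLp.toLp 2 (B.mulVec s))) k = R k := fun k => rfl
    rw [hG]
    simp only [Matrix.smul_apply, Matrix.sub_apply, Matrix.neg_apply, Matrix.vecMulVec_apply,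
      smul_eq_mul, hsa, e]
    rw [hcdef]
    ring
  have hℓB : ℓ B = b / (2*a) := by
    rw [hℓ, hsa, hnorm]
  have hval : Real.sqrt (2 * ℓ B) = Real.sqrt (b/a) := by
    rw [hℓB]
    congr 1
    field_simp
  obtain ⟨hn, hf⟩ := nuclear_aux s R a b (∑ k, s k * R k) c rfl rfl rfl rfl ha0 G hGe
  refine ⟨?_, by rw [hval]; exact hn, ?_⟩
  · -- derivative
    intro Δ hΔ
    set q : Fin d → ℝ := Δ *ᵥ s with hqdef
    have hcomp : ∀ (t : ℝ) (k : Fin d),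
        (y - (show EuclideanSpace ℝ (Fin d) from WithLp.toLp 2 ((B + t • Δ).mulVec s))) k
          = R k - t * q k := by
      intro t k
      show y k - ((B + t • Δ) *ᵥ s) k = R k - t * q k
      rw [Matrix.add_mulVec, Matrix.smul_mulVec, hRk]
      simp [Pi.add_apply, Pi.smul_apply, smul_eq_mul]
      ring
    set c₀ : ℝ := ∑ k, R k * R k with hc₀
    set c₁ : ℝ := -2 * ∑ k, R k * q k with hc₁
    set c₂ : ℝ := ∑ k, q k * q k with hc₂
    have hfun : (fun t : ℝ => ℓ (B + t • Δ)) = fun t => (c₀ + c₁*t + c₂*t^2) / (2*a) := by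
      funext t
      rw [hℓ, hsa, hnorm]
      congr 1
      calc ∑ k, (y - (show EuclideanSpace ℝ (Fin d) from WithLp.toLp 2 ((B + t • Δ).mulVec s))) k
              * (y - (show EuclideanSpace ℝ (Fin d) from WithLp.toLp 2 ((B + t • Δ).mulVec s))) k
          = ∑ k, (R k * R k + (-2*(R k * q k))*t + (q k * q k)*t^2) :=
            Finset.sum_congr rfl fun k _ => by rw [hcomp t k]; ring
        _ = c₀ + c₁*t + c₂*t^2 := by
            rw [hc₀, hc₁, hc₂, Finset.mul_sum, Finset.sum_add_distrib, Finset.sum_add_distrib,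
              ← Finset.sum_mul, ← Finset.sum_mul]
    have hΔe : ∀ i j, Δ j i = Δ i j := fun i j => hΔ.apply i j
    have htr : (G * Δ).trace = c₁ / (2*a) := by
      calc (G * Δ).trace = ∑ i, ∑ j, G i j * Δ j i := by
            simp [Matrix.trace, Matrix.diag, Matrix.mul_apply]
        _ = ∑ i, ∑ j, ((-(c * R j)) * (Δ j i * s i) + (-(c * R i)) * (Δ i j * s j)) := by
            refine Finset.sum_congr rfl fun i _ => Finset.sum_congr rfl fun j _ => ?_
            rw [hGe]
            linear_combination (-(c * (R i * s j))) * (hΔe i j)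
        _ = (∑ i, ∑ j, (-(c * R j)) * (Δ j i * s i))
              + (∑ i, ∑ j, (-(c * R i)) * (Δ i j * s j)) := by
            simp [Finset.sum_add_distrib]
        _ = (∑ j, (-(c * R j)) * q j) + (∑ i, (-(c * R i)) * q i) := by
            congr 1
            · rw [Finset.sum_comm]
              refine Finset.sum_congr rfl fun j _ => ?_
              rw [← Finset.mul_sum]
              rfl
            · refine Finset.sum_congr rfl fun i _ => ?_
              rw [← Finset.mul_sum]
              rfl
        _ = c₁ / (2*a) := by
            have hcol : ∑ k, (-(c * R k)) * q k = -(c * ∑ k, R k * q k) := by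
              rw [Finset.mul_sum, ← Finset.sum_neg_distrib]
              exact Finset.sum_congr rfl fun k _ => by ring
            rw [hcol, hc₁, hcdef]
            field_simp
            ring
    rw [hfun, htr]
    have h2 : HasDerivAt (fun t : ℝ => t^2) ((2:ℝ)*0) 0 := by
      simpa using hasDerivAt_pow 2 (0:ℝ)
    have h1 : HasDerivAt (fun t : ℝ => c₀ + c₁*t + c₂*t^2) (0 + c₁*1 + c₂*((2:ℝ)*0)) 0 :=
      ((hasDerivAt_const (0:ℝ) c₀).add ((hasDerivAt_id (0:ℝ)).const_mul c₁)).add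
        (h2.const_mul c₂)
    have h3 := h1.div_const (2*a)
    have e : c₁ / (2*a) = (0 + c₁*1 + c₂*((2:ℝ)*0)) / (2*a) := by norm_num
    rw [e]
    exact h3
  · -- frobenius
    rw [hval]
    have : frobNorm G = Real.sqrt (∑ i, ∑ j, (G i j)^2) := rfl
    rw [this]
    exact Real.sqrt_le_sqrt hf
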